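/- Fix β ∈ (1,2], T ∈ (0,∞), and a constant A > 0, and assume 0 ≤ a_{i,j} = a_{j,i} ≤ A(i+j) for all i,j ≥ 1. Let n ≥ 2 and let w^n be the unique nonnegative C^1 solution on [0,T] of the truncated coagulation–collisional-breakage system with nonnegative initial data (w_i^0)_{i=1}^n, and extend it by zero for i > n. Then, with Λ_1 = ∑_{i≥1} i w_i^0 and the constant ȷ_β > 0 (depending only on β) for which (i+j)((i+j)^β − i^β − j^β) ≤ ȷ_β (i j^β + i^β j) holds for all i,j ≥ 1, the β-th moment satisfies ∑_{i=1}^{∞} i^β w_i^n(t) ≤ (∑_{i=1}^{∞} i^β w_i^0) exp(A ȷ_β Λ_1 T) for all t ∈ [0,T]. -/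

import Mathlib

/-- The right-hand side of the truncated discrete coagulation equations with
collisional breakage. -/
noncomputable def truncRHS (a p : ℕ → ℕ → ℝ) (N : ℕ → ℕ → ℕ → ℝ) (n i : ℕ)
    (w : ℕ → ℝ) : ℝ :=
    (1/2) * ∑ j ∈ Finset.Icc 1 (i-1), p j (i-j) * a j (i-j) * w j * w (i-j)
  - ∑ j ∈ Finset.Icc 1 (n-i), a i j * w i * w j
  + (1/2) * ∑ j ∈ Finset.Icc (i+1) n, ∑ k ∈ Finset.Icc 1 (j-1),
      N (j-k) k i * (1 - p (j-k) k) * a (j-k) k * w (j-k) * w k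

open Finset


lemma reindex1 (n : ℕ) (f : ℕ → ℕ → ℝ) :
    ∑ i ∈ Icc 1 n, ∑ j ∈ Icc 1 (i-1), f j (i-j)
      = ∑ j ∈ Icc 1 (n-1), ∑ k ∈ Icc 1 (n-j), f j k := by
  rw [Finset.sum_sigma', Finset.sum_sigma']
  refine Finset.sum_nbij' (i := fun x => ⟨x.2, x.1 - x.2⟩) (j := fun x => ⟨x.1 + x.2, x.1⟩)
    ?_ ?_ ?_ ?_ ?_
  · rintro ⟨c,d⟩ hx; simp only [Finset.mem_sigma, Finset.mem_Icc] at hx ⊢; omega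
  · rintro ⟨c,d⟩ hx; simp only [Finset.mem_sigma, Finset.mem_Icc] at hx ⊢; omega
  · rintro ⟨c,d⟩ hx; simp only [Finset.mem_sigma, Finset.mem_Icc] at hx
    have h1 : d + (c - d) = c := by omega
    simp [h1]
  · rintro ⟨c,d⟩ hx; simp only [Finset.mem_sigma, Finset.mem_Icc] at hx
    have h1 : c + d - c = d := by omega
    simp [h1]
  · rintro ⟨c,d⟩ hx; rfl

lemma reindex2 (n : ℕ) (f : ℕ → ℕ → ℝ) :
    ∑ j ∈ Icc 1 n, ∑ k ∈ Icc 1 (j-1), f (j-k) k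
      = ∑ j ∈ Icc 1 (n-1), ∑ k ∈ Icc 1 (n-j), f j k := by
  rw [Finset.sum_sigma', Finset.sum_sigma']
  refine Finset.sum_nbij' (i := fun x => ⟨x.1 - x.2, x.2⟩) (j := fun x => ⟨x.1 + x.2, x.2⟩)
    ?_ ?_ ?_ ?_ ?_
  · rintro ⟨c,d⟩ hx; simp only [Finset.mem_sigma, Finset.mem_Icc] at hx ⊢; omega
  · rintro ⟨c,d⟩ hx; simp only [Finset.mem_sigma, Finset.mem_Icc] at hx ⊢; omega
  · rintro ⟨c,d⟩ hx; simp only [Finset.mem_sigma, Finset.mem_Icc] at hx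
    have h1 : c - d + d = c := by omega
    simp [h1]
  · rintro ⟨c,d⟩ hx; simp only [Finset.mem_sigma, Finset.mem_Icc] at hx
    have h1 : c + d - d = c := by omega
    simp [h1]
  · rintro ⟨c,d⟩ hx; rfl

lemma comm1 (n : ℕ) (f : ℕ → ℕ → ℝ) :
    ∑ i ∈ Icc 1 n, ∑ j ∈ Icc (i+1) n, f i j
      = ∑ j ∈ Icc 1 n, ∑ i ∈ Icc 1 (j-1), f i j := by
  rw [Finset.sum_sigma', Finset.sum_sigma']
  refine Finset.sum_nbij' (i := fun x => ⟨x.2, x.1⟩) (j := fun x => ⟨x.2, x.1⟩)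
    ?_ ?_ ?_ ?_ ?_
  · rintro ⟨c,d⟩ hx; simp only [Finset.mem_sigma, Finset.mem_Icc] at hx ⊢; omega
  · rintro ⟨c,d⟩ hx; simp only [Finset.mem_sigma, Finset.mem_Icc] at hx ⊢; omega
  · rintro ⟨c,d⟩ hx; rfl
  · rintro ⟨c,d⟩ hx; rfl
  · rintro ⟨c,d⟩ hx; rfl

lemma swapsym (n : ℕ) (f : ℕ → ℕ → ℝ) :
    ∑ j ∈ Icc 1 (n-1), ∑ k ∈ Icc 1 (n-j), f j k
      = ∑ j ∈ Icc 1 (n-1), ∑ k ∈ Icc 1 (n-j), f k j := by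
  rw [Finset.sum_sigma', Finset.sum_sigma']
  refine Finset.sum_nbij' (i := fun x => ⟨x.2, x.1⟩) (j := fun x => ⟨x.2, x.1⟩)
    ?_ ?_ ?_ ?_ ?_
  · rintro ⟨c,d⟩ hx; simp only [Finset.mem_sigma, Finset.mem_Icc] at hx ⊢; omega
  · rintro ⟨c,d⟩ hx; simp only [Finset.mem_sigma, Finset.mem_Icc] at hx ⊢; omega
  · rintro ⟨c,d⟩ hx; rfl
  · rintro ⟨c,d⟩ hx; rfl
  · rintro ⟨c,d⟩ hx; rfl

lemma combine3 (s : Finset ℕ) (f g h e : ℕ → ℝ)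
    (hfe : ∀ x ∈ s, (1/2) * f x - g x + (1/2) * h x = e x) :
    (1/2) * (∑ x ∈ s, f x) - (∑ x ∈ s, g x) + (1/2) * (∑ x ∈ s, h x) = ∑ x ∈ s, e x := by
  rw [Finset.mul_sum, Finset.mul_sum, ← Finset.sum_sub_distrib, ← Finset.sum_add_distrib]
  exact Finset.sum_congr rfl hfe

lemma master (n : ℕ) (a p : ℕ → ℕ → ℝ) (N : ℕ → ℕ → ℕ → ℝ) (u φ : ℕ → ℝ) :
    ∑ i ∈ Icc 1 n, φ i * truncRHS a p N n i u
      = ∑ j ∈ Icc 1 (n-1), ∑ k ∈ Icc 1 (n-j),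
          a j k * u j * u k *
            ((1/2) * (p j k * φ (j+k))
              + (1/2) * ((1 - p j k) * ∑ s ∈ Icc 1 (j+k-1), φ s * N j k s)
              - φ j) := by
  have expand : ∀ i ∈ Icc 1 n, φ i * truncRHS a p N n i u
      = (1/2) * (∑ j ∈ Icc 1 (i-1), φ i * (p j (i-j) * a j (i-j) * u j * u (i-j)))
        - (∑ j ∈ Icc 1 (n-i), φ i * (a i j * u i * u j))
        + (1/2) * (∑ j ∈ Icc (i+1) n, ∑ k ∈ Icc 1 (j-1),
            φ i * (N (j-k) k i * (1 - p (j-k) k) * a (j-k) k * u (j-k) * u k)) := by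
    intro i _
    have h1 : (∑ j ∈ Icc 1 (i-1), φ i * (p j (i-j) * a j (i-j) * u j * u (i-j)))
        = φ i * ∑ j ∈ Icc 1 (i-1), p j (i-j) * a j (i-j) * u j * u (i-j) := by
      rw [Finset.mul_sum]
    have h2 : (∑ j ∈ Icc 1 (n-i), φ i * (a i j * u i * u j))
        = φ i * ∑ j ∈ Icc 1 (n-i), a i j * u i * u j := by
      rw [Finset.mul_sum]
    have h3 : (∑ j ∈ Icc (i+1) n, ∑ k ∈ Icc 1 (j-1),
          φ i * (N (j-k) k i * (1 - p (j-k) k) * a (j-k) k * u (j-k) * u k))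
        = φ i * ∑ j ∈ Icc (i+1) n, ∑ k ∈ Icc 1 (j-1),
            N (j-k) k i * (1 - p (j-k) k) * a (j-k) k * u (j-k) * u k := by
      rw [Finset.mul_sum]
      exact Finset.sum_congr rfl fun j _ => by rw [Finset.mul_sum]
    rw [h1, h2, h3]
    simp only [truncRHS]
    ring
  rw [Finset.sum_congr rfl expand, Finset.sum_add_distrib, Finset.sum_sub_distrib,
    ← Finset.mul_sum, ← Finset.mul_sum]
  -- coagulation gain term
  have hC : ∑ i ∈ Icc 1 n, ∑ j ∈ Icc 1 (i-1), φ i * (p j (i-j) * a j (i-j) * u j * u (i-j))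
      = ∑ j ∈ Icc 1 (n-1), ∑ k ∈ Icc 1 (n-j), φ (j+k) * (p j k * a j k * u j * u k) := by
    rw [← reindex1 n (fun j k => φ (j+k) * (p j k * a j k * u j * u k))]
    refine Finset.sum_congr rfl fun i hi => Finset.sum_congr rfl fun j hj => ?_
    simp only [Finset.mem_Icc] at hi hj
    have : j + (i - j) = i := by omega
    rw [this]
  -- loss term
  have hL : ∑ i ∈ Icc 1 n, ∑ j ∈ Icc 1 (n-i), φ i * (a i j * u i * u j)
      = ∑ j ∈ Icc 1 (n-1), ∑ k ∈ Icc 1 (n-j), φ j * (a j k * u j * u k) := by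
    rw [← Finset.sum_subset (Finset.Icc_subset_Icc_right (by omega : n - 1 ≤ n))]
    intro i hi hni
    simp only [Finset.mem_Icc] at hi hni
    have : n - i = 0 := by omega
    simp [this]
  -- breakage term
  have hB : ∑ i ∈ Icc 1 n, ∑ j ∈ Icc (i+1) n, ∑ k ∈ Icc 1 (j-1),
        φ i * (N (j-k) k i * (1 - p (j-k) k) * a (j-k) k * u (j-k) * u k)
      = ∑ j ∈ Icc 1 (n-1), ∑ k ∈ Icc 1 (n-j),
          (∑ s ∈ Icc 1 (j+k-1), φ s * N j k s) * ((1 - p j k) * a j k * u j * u k) := by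
    rw [comm1 n (fun i j => ∑ k ∈ Icc 1 (j-1),
      φ i * (N (j-k) k i * (1 - p (j-k) k) * a (j-k) k * u (j-k) * u k))]
    have swapik : ∀ j ∈ Icc 1 n,
        ∑ i ∈ Icc 1 (j-1), ∑ k ∈ Icc 1 (j-1),
          φ i * (N (j-k) k i * (1 - p (j-k) k) * a (j-k) k * u (j-k) * u k)
        = ∑ k ∈ Icc 1 (j-1),
            (∑ s ∈ Icc 1 ((j-k)+k-1), φ s * N (j-k) k s) *
              ((1 - p (j-k) k) * a (j-k) k * u (j-k) * u k) := by
      intro j _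
      rw [Finset.sum_comm]
      refine Finset.sum_congr rfl fun k hk => ?_
      simp only [Finset.mem_Icc] at hk
      have hjk : j - k + k - 1 = j - 1 := by omega
      rw [hjk, Finset.sum_mul]
      refine Finset.sum_congr rfl fun s _ => by ring
    rw [Finset.sum_congr rfl swapik,
      reindex2 n (fun b c => (∑ s ∈ Icc 1 (b+c-1), φ s * N b c s) *
        ((1 - p b c) * a b c * u b * u c))]
  rw [hC, hL, hB]
  refine combine3 _ _ _ _ _ fun j hj => ?_
  refine combine3 _ _ _ _ _ fun k hk => by ring

lemma mass_zero (n : ℕ) (a p : ℕ → ℕ → ℝ) (N : ℕ → ℕ → ℕ → ℝ) (u : ℕ → ℝ)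
    (ha_symm : ∀ i j, a i j = a j i)
    (hN_mass : ∀ i j, 1 ≤ i → 1 ≤ j →
      ∑ s ∈ Finset.Icc 1 (i+j-1), (Nat.cast s : ℝ) * N i j s = (i : ℝ) + (j : ℝ)) :
    ∑ i ∈ Icc 1 n, (i : ℝ) * truncRHS a p N n i u = 0 := by
  rw [master n a p N u (fun i => (i : ℝ))]
  have hsimp : ∀ j ∈ Icc 1 (n-1), ∀ k ∈ Icc 1 (n-j),
      a j k * u j * u k *
        ((1/2) * (p j k * ((j+k : ℕ) : ℝ))
          + (1/2) * ((1 - p j k) * ∑ s ∈ Icc 1 (j+k-1), (s : ℝ) * N j k s)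
          - (j : ℝ))
      = a j k * u j * u k * (((k : ℝ) - (j : ℝ))/2) := by
    intro j hj k hk
    simp only [Finset.mem_Icc] at hj hk
    rw [hN_mass j k hj.1 hk.1]
    push_cast
    ring
  rw [Finset.sum_congr rfl fun j hj => Finset.sum_congr rfl fun k hk => hsimp j hj k hk]
  have hswap := swapsym n (fun j k => a j k * u j * u k * (((k : ℝ) - (j : ℝ))/2))
  have hneg : ∀ j ∈ Icc 1 (n-1), ∀ k ∈ Icc 1 (n-j),
      a k j * u k * u j * (((j : ℝ) - (k : ℝ))/2)
        = - (a j k * u j * u k * (((k : ℝ) - (j : ℝ))/2)) := by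
    intro j _ k _
    rw [ha_symm k j]; ring
  rw [Finset.sum_congr rfl fun j hj => Finset.sum_congr rfl fun k hk => hneg j hj k hk] at hswap
  simp only [Finset.sum_neg_distrib] at hswap
  linarith

lemma rpow_superadd (β : ℝ) (hβ : 1 ≤ β) (x y : ℝ) (hx : 0 ≤ x) (hy : 0 ≤ y) :
    x^β + y^β ≤ (x+y)^β := by
  have hβ0 : β ≠ 0 := by linarith
  rcases hx.eq_or_lt with rfl | hx'
  · simp [Real.zero_rpow hβ0]
  rcases hy.eq_or_lt with rfl | hy'
  · simp [Real.zero_rpow hβ0]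
  have hxy : (0:ℝ) < x + y := by linarith
  have e : ∀ z : ℝ, 0 < z → z ^ β = z * z ^ (β - 1) := by
    intro z hz
    rw [show β = 1 + (β - 1) by ring, Real.rpow_add hz, Real.rpow_one]
    ring_nf
  have h1 : x ^ (β - 1) ≤ (x + y) ^ (β - 1) :=
    Real.rpow_le_rpow hx (by linarith) (by linarith)
  have h2 : y ^ (β - 1) ≤ (x + y) ^ (β - 1) :=
    Real.rpow_le_rpow hy (by linarith) (by linarith)
  rw [e x hx', e y hy', e _ hxy]
  nlinarith [Real.rpow_nonneg (le_of_lt hxy) (β - 1)]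

set_option maxHeartbeats 2000000 in
lemma beta_bound (β A jβ : ℝ) (hβ1 : 1 < β) (hA : 0 ≤ A) (hjβ : 0 ≤ jβ)
    (n : ℕ) (a p : ℕ → ℕ → ℝ) (N : ℕ → ℕ → ℕ → ℝ) (u : ℕ → ℝ)
    (ha_nonneg : ∀ i j, 0 ≤ a i j) (ha_symm : ∀ i j, a i j = a j i)
    (ha_bound : ∀ i j, 1 ≤ i → 1 ≤ j → a i j ≤ A * ((i : ℝ) + (j : ℝ)))
    (hp_nonneg : ∀ i j, 0 ≤ p i j) (hp_symm : ∀ i j, p i j = p j i)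
    (hp_le : ∀ i j, p i j ≤ 1)
    (hN_nonneg : ∀ i j s, 0 ≤ N i j s) (hN_symm : ∀ i j s, N i j s = N j i s)
    (hN_mass : ∀ i j, 1 ≤ i → 1 ≤ j →
      ∑ s ∈ Finset.Icc 1 (i+j-1), (Nat.cast s : ℝ) * N i j s = (i : ℝ) + (j : ℝ))
    (hjβ_ineq : ∀ i j : ℕ, 1 ≤ i → 1 ≤ j →
      ((i : ℝ) + (j : ℝ)) * (((i : ℝ) + (j : ℝ)) ^ β - (i : ℝ) ^ β - (j : ℝ) ^ β)
        ≤ jβ * ((i : ℝ) * (j : ℝ) ^ β + (i : ℝ) ^ β * (j : ℝ)))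
    (hu : ∀ i ∈ Icc 1 n, 0 ≤ u i) :
    ∑ i ∈ Icc 1 n, (i : ℝ)^β * truncRHS a p N n i u
      ≤ A * jβ * (∑ i ∈ Icc 1 n, (i : ℝ) * u i) * (∑ i ∈ Icc 1 n, (i : ℝ)^β * u i) := by
  set F : ℕ → ℕ → ℝ := fun j k =>
    a j k * u j * u k *
      ((1/2) * (p j k * ((j+k : ℕ) : ℝ)^β)
        + (1/2) * ((1 - p j k) * ∑ s ∈ Icc 1 (j+k-1), (s : ℝ)^β * N j k s)
        - (j : ℝ)^β) with hF
  have hmaster : ∑ i ∈ Icc 1 n, (i : ℝ)^β * truncRHS a p N n i u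
      = ∑ j ∈ Icc 1 (n-1), ∑ k ∈ Icc 1 (n-j), F j k :=
    master n a p N u (fun i => (i : ℝ)^β)
  set G : ℕ → ℕ → ℝ := fun j k =>
    A * jβ * ((j : ℝ) * (k : ℝ)^β + (j : ℝ)^β * (k : ℝ)) * (u j * u k) with hG
  have hterm : ∀ j k : ℕ, 1 ≤ j → j ≤ n → 1 ≤ k → k ≤ n →
      F j k + F k j ≤ G j k := by
    intro j k hj hjn hk hkn
    have huj : 0 ≤ u j := hu j (Finset.mem_Icc.mpr ⟨hj, hjn⟩)
    have huk : 0 ≤ u k := hu k (Finset.mem_Icc.mpr ⟨hk, hkn⟩)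
    have hm0 : (0:ℝ) < ((j+k : ℕ) : ℝ) := by
      have : 0 < j + k := by omega
      exact_mod_cast this
    have hcast : ((j+k : ℕ) : ℝ) = (j : ℝ) + (k : ℝ) := by push_cast; ring
    have hβ1' : (0:ℝ) ≤ β - 1 := by linarith
    -- bound on the fragmentation sum
    have hSle : ∑ s ∈ Icc 1 (j+k-1), (s : ℝ)^β * N j k s ≤ ((j+k : ℕ) : ℝ)^β := by
      have step1 : ∑ s ∈ Icc 1 (j+k-1), (s : ℝ)^β * N j k s
          ≤ ∑ s ∈ Icc 1 (j+k-1), ((j+k : ℕ) : ℝ)^(β-1) * ((s : ℝ) * N j k s) := by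
        refine Finset.sum_le_sum fun s hs => ?_
        simp only [Finset.mem_Icc] at hs
        have hs1 : (1:ℝ) ≤ (s : ℝ) := by exact_mod_cast hs.1
        have hsm : (s : ℝ) ≤ ((j+k : ℕ) : ℝ) := by
          have : s ≤ j + k := by omega
          exact_mod_cast this
        have hsb : (s : ℝ)^β ≤ (s : ℝ) * ((j+k : ℕ) : ℝ)^(β-1) := by
          have e : (s : ℝ)^β = (s : ℝ) * (s : ℝ)^(β-1) := by
            rw [show β = 1 + (β-1) by ring, Real.rpow_add (by linarith), Real.rpow_one]
            ring_nf
          rw [e]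
          have h := Real.rpow_le_rpow (by linarith : (0:ℝ) ≤ (s : ℝ)) hsm hβ1'
          nlinarith
        calc (s : ℝ)^β * N j k s
            ≤ ((s : ℝ) * ((j+k : ℕ) : ℝ)^(β-1)) * N j k s :=
              mul_le_mul_of_nonneg_right hsb (hN_nonneg j k s)
          _ = ((j+k : ℕ) : ℝ)^(β-1) * ((s : ℝ) * N j k s) := by ring
      rw [← Finset.mul_sum, hN_mass j k hj hk] at step1
      have heq : ((j+k : ℕ) : ℝ)^(β-1) * ((j : ℝ) + (k : ℝ)) = ((j+k : ℕ) : ℝ)^β := by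
        rw [← hcast]
        rw [← Real.rpow_add_one (ne_of_gt hm0) (β-1)]
        congr 1
        ring
      linarith [step1, heq.ge]
    have hsuper : (j : ℝ)^β + (k : ℝ)^β ≤ ((j+k : ℕ) : ℝ)^β := by
      rw [hcast]
      exact rpow_superadd β (le_of_lt hβ1) _ _ (Nat.cast_nonneg j) (Nat.cast_nonneg k)
    have hFkj : F k j = a j k * u k * u j *
        ((1/2) * (p j k * ((j+k : ℕ) : ℝ)^β)
          + (1/2) * ((1 - p j k) * ∑ s ∈ Icc 1 (j+k-1), (s : ℝ)^β * N j k s)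
          - (k : ℝ)^β) := by
      simp only [hF]
      rw [Nat.add_comm k j, ha_symm k j, hp_symm k j]
      have hNs : ∑ s ∈ Icc 1 (j+k-1), (s : ℝ)^β * N k j s
          = ∑ s ∈ Icc 1 (j+k-1), (s : ℝ)^β * N j k s :=
        Finset.sum_congr rfl fun s _ => by rw [hN_symm]
      rw [hNs]
    have key : a j k * (p j k * ((j+k : ℕ) : ℝ)^β
          + (1 - p j k) * (∑ s ∈ Icc 1 (j+k-1), (s : ℝ)^β * N j k s)
          - (j : ℝ)^β - (k : ℝ)^β)
        ≤ A * (jβ * ((j : ℝ) * (k : ℝ)^β + (j : ℝ)^β * (k : ℝ))) := by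
      set X := ((j+k : ℕ) : ℝ)^β with hX
      set Sg := ∑ s ∈ Icc 1 (j+k-1), (s : ℝ)^β * N j k s with hSg
      have hP0 := hp_nonneg j k
      have hP1 := hp_le j k
      have hbr : p j k * X + (1 - p j k) * Sg - (j : ℝ)^β - (k : ℝ)^β
          ≤ X - (j : ℝ)^β - (k : ℝ)^β := by nlinarith
      have hD0 : (0:ℝ) ≤ X - (j : ℝ)^β - (k : ℝ)^β := by linarith
      have haa := ha_bound j k hj hk
      have haan := ha_nonneg j k
      have hjb := hjβ_ineq j k hj hk
      have hXeq : X = ((j : ℝ) + (k : ℝ))^β := by rw [hX, hcast]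
      have h1 : a j k * (p j k * X + (1 - p j k) * Sg - (j : ℝ)^β - (k : ℝ)^β)
          ≤ a j k * (X - (j : ℝ)^β - (k : ℝ)^β) :=
        mul_le_mul_of_nonneg_left hbr haan
      have h2 : a j k * (X - (j : ℝ)^β - (k : ℝ)^β)
          ≤ A * ((j : ℝ) + (k : ℝ)) * (X - (j : ℝ)^β - (k : ℝ)^β) :=
        mul_le_mul_of_nonneg_right haa hD0
      have h3 : A * ((j : ℝ) + (k : ℝ)) * (X - (j : ℝ)^β - (k : ℝ)^β)
          ≤ A * (jβ * ((j : ℝ) * (k : ℝ)^β + (j : ℝ)^β * (k : ℝ))) := by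
        have := mul_le_mul_of_nonneg_left hjb hA
        rw [hXeq]
        nlinarith [this]
      linarith
    calc F j k + F k j
        = (a j k * (p j k * ((j+k : ℕ) : ℝ)^β
            + (1 - p j k) * (∑ s ∈ Icc 1 (j+k-1), (s : ℝ)^β * N j k s)
            - (j : ℝ)^β - (k : ℝ)^β)) * (u j * u k) := by
          rw [hFkj]; simp only [hF]; ring
      _ ≤ (A * (jβ * ((j : ℝ) * (k : ℝ)^β + (j : ℝ)^β * (k : ℝ)))) * (u j * u k) :=
          mul_le_mul_of_nonneg_right key (mul_nonneg huj huk)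
      _ = G j k := by simp only [hG]; ring
  -- symmetrize
  have hsym := swapsym n F
  have hhalf : ∑ j ∈ Icc 1 (n-1), ∑ k ∈ Icc 1 (n-j), F j k
      = (1/2) * ∑ j ∈ Icc 1 (n-1), ∑ k ∈ Icc 1 (n-j), (F j k + F k j) := by
    simp only [Finset.sum_add_distrib]
    rw [← hsym]
    ring
  have hGnn : ∀ j ∈ Icc 1 n, ∀ k ∈ Icc 1 n, 0 ≤ G j k := by
    intro j hj k hk
    have huj := hu j hj
    have huk := hu k hk
    simp only [hG]
    have : (0:ℝ) ≤ (j : ℝ) * (k : ℝ)^β + (j : ℝ)^β * (k : ℝ) := by positivity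
    exact mul_nonneg (mul_nonneg (mul_nonneg hA hjβ) this) (mul_nonneg huj huk)
  have hstep : ∑ j ∈ Icc 1 (n-1), ∑ k ∈ Icc 1 (n-j), (F j k + F k j)
      ≤ ∑ j ∈ Icc 1 n, ∑ k ∈ Icc 1 n, G j k := by
    calc ∑ j ∈ Icc 1 (n-1), ∑ k ∈ Icc 1 (n-j), (F j k + F k j)
        ≤ ∑ j ∈ Icc 1 (n-1), ∑ k ∈ Icc 1 (n-j), G j k := by
          refine Finset.sum_le_sum fun j hj => Finset.sum_le_sum fun k hk => ?_
          simp only [Finset.mem_Icc] at hj hk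
          exact hterm j k hj.1 (by omega) hk.1 (by omega)
      _ ≤ ∑ j ∈ Icc 1 (n-1), ∑ k ∈ Icc 1 n, G j k := by
          refine Finset.sum_le_sum fun j hj => ?_
          refine Finset.sum_le_sum_of_subset_of_nonneg
            (Finset.Icc_subset_Icc_right (by omega)) ?_
          intro k hk _
          refine hGnn j ?_ k hk
          simp only [Finset.mem_Icc] at hj ⊢
          omega
      _ ≤ ∑ j ∈ Icc 1 n, ∑ k ∈ Icc 1 n, G j k := by
          refine Finset.sum_le_sum_of_subset_of_nonneg
            (Finset.Icc_subset_Icc_right (by omega)) ?_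
          intro j hj _
          exact Finset.sum_nonneg fun k hk => hGnn j hj k hk
  have hfin : (1/2) * ∑ j ∈ Icc 1 n, ∑ k ∈ Icc 1 n, G j k
      = A * jβ * (∑ i ∈ Icc 1 n, (i : ℝ) * u i) * (∑ i ∈ Icc 1 n, (i : ℝ)^β * u i) := by
    have e : ∀ j k : ℕ, G j k
        = A * jβ * (((j : ℝ) * u j) * ((k : ℝ)^β * u k))
          + A * jβ * (((j : ℝ)^β * u j) * ((k : ℝ) * u k)) := by
      intro j k; simp only [hG]; ring
    have split : ∑ j ∈ Icc 1 n, ∑ k ∈ Icc 1 n, G j k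
        = A * jβ * ((∑ i ∈ Icc 1 n, (i : ℝ) * u i) * (∑ i ∈ Icc 1 n, (i : ℝ)^β * u i))
          + A * jβ * ((∑ i ∈ Icc 1 n, (i : ℝ)^β * u i) * (∑ i ∈ Icc 1 n, (i : ℝ) * u i)) := by
      rw [Finset.sum_mul_sum, Finset.sum_mul_sum, Finset.mul_sum, Finset.mul_sum,
        ← Finset.sum_add_distrib]
      refine Finset.sum_congr rfl fun j _ => ?_
      rw [Finset.mul_sum, Finset.mul_sum, ← Finset.sum_add_distrib]
      exact Finset.sum_congr rfl fun k _ => e j k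
    rw [split]; ring
  rw [hmaster, hhalf, ← hfin]
  linarith

/-- Uniform bound on the `β`-th moment of the (zero-extended) truncated solutions:
`∑_{i≥1} i^β wᵢⁿ(t) ≤ (∑_{i≥1} i^β wᵢ⁰) exp(A ȷ_β Λ₁ T)` for `t ∈ [0,T]`. -/
theorem truncated_beta_moment_bound
    (β : ℝ) (hβ1 : 1 < β) (hβ2 : β ≤ 2)
    (T : ℝ) (hT : 0 < T) (A : ℝ) (hA : 0 < A)
    (a p : ℕ → ℕ → ℝ) (N : ℕ → ℕ → ℕ → ℝ)
    (ha_nonneg : ∀ i j, 0 ≤ a i j) (ha_symm : ∀ i j, a i j = a j i)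
    (ha_bound : ∀ i j, 1 ≤ i → 1 ≤ j → a i j ≤ A * ((i : ℝ) + (j : ℝ)))
    (hp_nonneg : ∀ i j, 0 ≤ p i j) (hp_symm : ∀ i j, p i j = p j i)
    (hp_le : ∀ i j, p i j ≤ 1)
    (hN_nonneg : ∀ i j s, 0 ≤ N i j s) (hN_symm : ∀ i j s, N i j s = N j i s)
    (hN_mass : ∀ i j, 1 ≤ i → 1 ≤ j →
      ∑ s ∈ Finset.Icc 1 (i+j-1), (Nat.cast s : ℝ) * N i j s = (i : ℝ) + (j : ℝ))
    (n : ℕ) (hn : 2 ≤ n)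
    (w : ℕ → ℝ → ℝ)
    (hw_nonneg : ∀ i ∈ Finset.Icc 1 n, ∀ t ∈ Set.Icc (0:ℝ) T, 0 ≤ w i t)
    (hw_init_nonneg : ∀ i ∈ Finset.Icc 1 n, 0 ≤ w i 0)
    (hw_ode : ∀ i ∈ Finset.Icc 1 n, ∀ t ∈ Set.Icc (0:ℝ) T,
      HasDerivWithinAt (w i) (truncRHS a p N n i (fun j => w j t)) (Set.Icc 0 T) t)
    (hw_ext : ∀ i, n < i → ∀ t : ℝ, w i t = 0)
    (Λ₁ : ℝ) (hΛ₁ : Λ₁ = ∑' i : ℕ, (Nat.cast i : ℝ) * w i 0)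
    (jβ : ℝ) (hjβ : 0 < jβ)
    (hjβ_ineq : ∀ i j : ℕ, 1 ≤ i → 1 ≤ j →
      ((i : ℝ) + (j : ℝ)) * (((i : ℝ) + (j : ℝ)) ^ β - (i : ℝ) ^ β - (j : ℝ) ^ β)
        ≤ jβ * ((i : ℝ) * (j : ℝ) ^ β + (i : ℝ) ^ β * (j : ℝ))) :
    ∀ t ∈ Set.Icc (0:ℝ) T,
      ∑' i : ℕ, (Nat.cast i : ℝ) ^ β * w i t
        ≤ (∑' i : ℕ, (Nat.cast i : ℝ) ^ β * w i 0) * Real.exp (A * jβ * Λ₁ * T) := by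
  intro t ht
  have hβ0 : β ≠ 0 := by linarith
  -- reduce tsums to finite sums
  have htsum_beta : ∀ s : ℝ, ∑' i : ℕ, (Nat.cast i : ℝ) ^ β * w i s
      = ∑ i ∈ Finset.Icc 1 n, (i : ℝ) ^ β * w i s := by
    intro s
    refine tsum_eq_sum fun i hi => ?_
    simp only [Finset.mem_Icc, not_and_or, not_le] at hi
    rcases hi with hi | hi
    · interval_cases i
      simp [Real.zero_rpow hβ0]
    · rw [hw_ext i (by omega) s, mul_zero]
  have htsum_one : ∑' i : ℕ, (Nat.cast i : ℝ) * w i 0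
      = ∑ i ∈ Finset.Icc 1 n, (i : ℝ) * w i 0 := by
    refine tsum_eq_sum fun i hi => ?_
    simp only [Finset.mem_Icc, not_and_or, not_le] at hi
    rcases hi with hi | hi
    · interval_cases i; simp
    · rw [hw_ext i (by omega) 0, mul_zero]
  rw [htsum_beta t, htsum_beta 0]
  set M1 : ℝ → ℝ := fun s => ∑ i ∈ Finset.Icc 1 n, (i : ℝ) * w i s with hM1
  set Mβ : ℝ → ℝ := fun s => ∑ i ∈ Finset.Icc 1 n, (i : ℝ) ^ β * w i s with hMβ
  have hΛM1 : Λ₁ = M1 0 := by rw [hΛ₁, htsum_one]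
  have hΛnn : 0 ≤ Λ₁ := by
    rw [hΛM1]
    exact Finset.sum_nonneg fun i hi =>
      mul_nonneg (Nat.cast_nonneg i) (hw_init_nonneg i hi)
  set K : ℝ := A * jβ * Λ₁ with hK
  have hKnn : 0 ≤ K := by
    have := mul_nonneg (mul_nonneg hA.le hjβ.le) hΛnn
    simpa [hK]
  -- derivative of M1
  have hM1deriv : ∀ s ∈ Set.Icc (0:ℝ) T, HasDerivWithinAt M1 0 (Set.Icc 0 T) s := by
    intro s hs
    have h := HasDerivWithinAt.fun_sum
      (fun i hi => ((hw_ode i hi s hs).const_mul ((i : ℝ))))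
    rwa [mass_zero n a p N (fun j => w j s) ha_symm hN_mass] at h
  -- M1 is constant
  have hM1const : ∀ s ∈ Set.Icc (0:ℝ) T, M1 s = M1 0 := by
    refine constant_of_has_deriv_right_zero
      (fun s hs => (hM1deriv s hs).continuousWithinAt) (fun s hs => ?_)
    exact (hM1deriv s (Set.Ico_subset_Icc_self hs)).mono_of_mem_nhdsWithin
      (Icc_mem_nhdsGE_of_mem hs)
  -- derivative of Mβ
  have hMβderiv : ∀ s ∈ Set.Icc (0:ℝ) T,
      HasDerivWithinAt Mβ
        (∑ i ∈ Finset.Icc 1 n, (i : ℝ) ^ β * truncRHS a p N n i (fun j => w j s))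
        (Set.Icc 0 T) s := by
    intro s hs
    exact HasDerivWithinAt.fun_sum
      (fun i hi => ((hw_ode i hi s hs).const_mul ((i : ℝ) ^ β)))
  -- the differential inequality
  have hSb : ∀ s ∈ Set.Icc (0:ℝ) T,
      ∑ i ∈ Finset.Icc 1 n, (i : ℝ) ^ β * truncRHS a p N n i (fun j => w j s)
        ≤ K * Mβ s := by
    intro s hs
    have hb := beta_bound β A jβ hβ1 hA.le hjβ.le n a p N (fun j => w j s)
      ha_nonneg ha_symm ha_bound hp_nonneg hp_symm hp_le hN_nonneg hN_symm hN_mass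
      hjβ_ineq (fun i hi => hw_nonneg i hi s hs)
    have : M1 s = Λ₁ := by rw [hΛM1]; exact hM1const s hs
    calc ∑ i ∈ Finset.Icc 1 n, (i : ℝ) ^ β * truncRHS a p N n i (fun j => w j s)
        ≤ A * jβ * M1 s * Mβ s := hb
      _ = K * Mβ s := by rw [this, hK]
  -- Mβ is nonneg at 0
  have hMβ0nn : 0 ≤ Mβ 0 :=
    Finset.sum_nonneg fun i hi =>
      mul_nonneg (Real.rpow_nonneg (Nat.cast_nonneg i) β) (hw_init_nonneg i hi)
  -- Gronwall via the function g
  set g : ℝ → ℝ := fun s => Mβ s * Real.exp (-K * s) with hg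
  have hgderiv : ∀ s ∈ Set.Icc (0:ℝ) T,
      HasDerivWithinAt g
        ((∑ i ∈ Finset.Icc 1 n, (i : ℝ) ^ β * truncRHS a p N n i (fun j => w j s))
            * Real.exp (-K * s)
          + Mβ s * (Real.exp (-K * s) * (-K))) (Set.Icc 0 T) s := by
    intro s hs
    have he : HasDerivAt (fun x : ℝ => Real.exp (-K * x)) (Real.exp (-K * s) * (-K)) s := by
      have h1 : HasDerivAt (fun x : ℝ => -K * x) (-K) s := by
        simpa using (hasDerivAt_id s).const_mul (-K)
      simpa using h1.exp
    exact (hMβderiv s hs).mul (he.hasDerivWithinAt)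
  have hganti : AntitoneOn g (Set.Icc 0 T) := by
    refine antitoneOn_of_deriv_nonpos (convex_Icc 0 T)
      (fun s hs => ((hgderiv s hs).continuousWithinAt)) ?_ ?_
    · intro s hs
      rw [interior_Icc] at hs
      exact ((hgderiv s (Set.Ioo_subset_Icc_self hs)).hasDerivAt
        (Icc_mem_nhds hs.1 hs.2)).differentiableAt.differentiableWithinAt
    · intro s hs
      rw [interior_Icc] at hs
      have hd := ((hgderiv s (Set.Ioo_subset_Icc_self hs)).hasDerivAt
        (Icc_mem_nhds hs.1 hs.2)).deriv
      rw [hd]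
      have hb := hSb s (Set.Ioo_subset_Icc_self hs)
      have hexp : 0 < Real.exp (-K * s) := Real.exp_pos _
      nlinarith
  have hg0 : g t ≤ g 0 := hganti (Set.left_mem_Icc.mpr hT.le) ht ht.1
  have hgt : g t = Mβ t * Real.exp (-K * t) := rfl
  have hg00 : g 0 = Mβ 0 := by simp [hg]
  have hMβt : Mβ t ≤ Mβ 0 * Real.exp (K * t) := by
    have hexp : 0 < Real.exp (-K * t) := Real.exp_pos _
    have h1 : Mβ t * Real.exp (-K * t) ≤ Mβ 0 := by rw [← hg00]; exact hg0
    have h2 : Real.exp (-K * t) * Real.exp (K * t) = 1 := by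
      rw [← Real.exp_add]; ring_nf; exact Real.exp_zero
    nlinarith [Real.exp_pos (K * t)]
  calc Mβ t ≤ Mβ 0 * Real.exp (K * t) := hMβt
    _ ≤ Mβ 0 * Real.exp (K * T) := by
        have := Real.exp_le_exp.mpr (mul_le_mul_of_nonneg_left ht.2 hKnn)
        exact mul_le_mul_of_nonneg_left this hMβ0nn
    _ = Mβ 0 * Real.exp (A * jβ * Λ₁ * T) := by rw [hK]
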